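/- The 2-firm, 2-worker market with preferences f1: {w1,w2} ≻ ∅, f2: {w1} ≻ {w2} ≻ ∅, w1: f1 ≻ f2, w2: f1 ≻ f2 is not concave: no full-time matching dominates the schedule matching assigning time share 1/2 to each of {w1,w2} (at f1), {w1} (at f2), and {w2} (at f2). -/

import Mathlib

open Finset
open scoped Classical

noncomputable section

variable {F W : Type} [Fintype F] [Fintype W] [DecidableEq F] [DecidableEq W]

/-- The set of workers assigned to firm `f` in matching `μ`. -/
def assigned (μ : W → Option F) (f : F) : Finset W :=
  Finset.univ.filter fun w => μ w = some f

/-- Worker `w`'s strict comparison of situations (a situation is a firm together with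
its full set of employees, or being unmatched), with the artificial externalities:
the worker is slightly better off when her employer is better off. -/
def wB (uF : F → Finset W → ℝ) (uW : W → Option F → ℝ) (w : W) :
    Option (F × Finset W) → Option (F × Finset W) → Prop
  | some p, some q =>
      uW w (some p.1) > uW w (some q.1) ∨ (p.1 = q.1 ∧ uF p.1 p.2 > uF q.1 q.2)
  | some p, none => uW w (some p.1) > uW w none
  | none, some q => uW w none > uW w (some q.1)
  | none, none => False

def wGe (uF : F → Finset W → ℝ) (uW : W → Option F → ℝ) (w : W)
    (p q : Option (F × Finset W)) : Prop :=
  wB uF uW w p q ∨ p = q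

/-- Total workload of worker `w` in the schedule `t`. -/
def workerLoad (t : F → Finset W → ℝ) (w : W) : ℝ :=
  ∑ f, ∑ S ∈ Finset.univ.filter (fun S => w ∈ S), t f S

/-- A (π-)schedule matching in the basic setting with indicator intensities and
capacities `capF`, `capW`. -/
def IsSched (uF : F → Finset W → ℝ) (capF : F → ℝ) (capW : W → ℝ)
    (t : F → Finset W → ℝ) : Prop :=
  (∀ f S, 0 ≤ t f S) ∧ (∀ f S, 0 < t f S → uF f S > uF f ∅) ∧
  (∀ f, ∑ S, t f S ≤ capF f) ∧ (∀ w, workerLoad t w ≤ capW w)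

/-- `S0` is firm `f`'s worst situation in the schedule matching `t`. -/
def WorstF (uF : F → Finset W → ℝ) (capF : F → ℝ) (t : F → Finset W → ℝ)
    (f : F) (S0 : Finset W) : Prop :=
  ((∑ S, t f S) = capF f ∧ 0 < t f S0 ∧ ∀ S, 0 < t f S → uF f S0 ≤ uF f S) ∨
  ((∑ S, t f S) ≠ capF f ∧ S0 = ∅)

/-- `p` is worker `w`'s worst situation in the schedule matching `t` (using `▷_w`). -/
def WorstW (uF : F → Finset W → ℝ) (uW : W → Option F → ℝ) (capW : W → ℝ)
    (t : F → Finset W → ℝ) (w : W) (p : Option (F × Finset W)) : Prop :=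
  (workerLoad t w = capW w ∧ ∃ f S, p = some (f, S) ∧ 0 < t f S ∧ w ∈ S ∧
    ∀ f' S', 0 < t f' S' → w ∈ S' → wGe uF uW w (some (f', S')) p) ∨
  (workerLoad t w ≠ capW w ∧ p = none)

/-- Worker `w`'s situation in the full-time matching `μ`. -/
def situ (μ : W → Option F) (w : W) : Option (F × Finset W) :=
  (μ w).map fun f => (f, assigned μ f)

/-- Matching `μ` dominates schedule matching `t`. -/
def Dominates (uF : F → Finset W → ℝ) (uW : W → Option F → ℝ)
    (capF : F → ℝ) (capW : W → ℝ) (t : F → Finset W → ℝ) (μ : W → Option F) : Prop :=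
  (∀ f S0, WorstF uF capF t f S0 → uF f (assigned μ f) ≥ uF f S0) ∧
  (∀ w p, WorstW uF uW capW t w p → wGe uF uW w (situ μ w) p)

/-- Individual rationality of a matching. -/
def IR (uF : F → Finset W → ℝ) (uW : W → Option F → ℝ) (μ : W → Option F) : Prop :=
  (∀ f, uF f (assigned μ f) ≥ uF f ∅) ∧ (∀ w, uW w (μ w) ≥ uW w none)

/-- Firm `f` together with the set of workers `S` blocks the matching `μ`. -/
def Blocks (uF : F → Finset W → ℝ) (uW : W → Option F → ℝ) (μ : W → Option F)
    (f : F) (S : Finset W) : Prop :=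
  uF f S > uF f (assigned μ f) ∧ ∀ w ∈ S, uW w (some f) ≥ uW w (μ w)

/-- Stability of a matching in the basic setting. -/
def StableM (uF : F → Finset W → ℝ) (uW : W → Option F → ℝ) (μ : W → Option F) : Prop :=
  IR uF uW μ ∧ ¬∃ f S, Blocks uF uW μ f S

/-- Firm preferences: f1 : {w1,w2} ≻ ∅ ; f2 : {w1} ≻ {w2} ≻ ∅. -/
def uF10 : Fin 2 → Finset (Fin 2) → ℝ := fun f S =>
  if f = 0 then (if S = {0, 1} then 1 else if S = ∅ then 0 else -1)
  else (if S = {0} then 2 else if S = {1} then 1 else if S = ∅ then 0 else -1)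

/-- Worker preferences: w1 : f1 ≻ f2 ; w2 : f1 ≻ f2. -/
def uW10 : Fin 2 → Option (Fin 2) → ℝ := fun _ o =>
  if o = some 0 then 2 else if o = some 1 then 1 else 0

/-- The schedule matching assigning time share 1/2 to each of {w1,w2} at f1,
{w1} at f2 and {w2} at f2. -/
def t10 : Fin 2 → Finset (Fin 2) → ℝ := fun f S =>
  if f = 0 ∧ S = {0, 1} then 1 / 2
  else if f = 1 ∧ (S = {0} ∨ S = {1}) then 1 / 2 else 0

lemma sum4 (g : Finset (Fin 2) → ℝ) :
    ∑ S, g S = g ∅ + g {0} + g {1} + g {0, 1} := by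
  have h : (Finset.univ : Finset (Finset (Fin 2))) = {∅, {0}, {1}, {0, 1}} := by decide
  rw [h, Finset.sum_insert (by decide), Finset.sum_insert (by decide),
    Finset.sum_insert (by decide), Finset.sum_singleton]
  ring

lemma t10pos : ∀ f S, 0 < t10 f S → (f = 0 ∧ S = {0, 1}) ∨ (f = 1 ∧ (S = {0} ∨ S = {1})) := by
  intro f S h
  unfold t10 at h
  split_ifs at h with h1 h2
  · exact Or.inl h1
  · exact Or.inr h2
  · norm_num at h

lemma t10v00 : t10 0 ∅ = 0 := by simp (config := { decide := true }) [t10]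
lemma t10v01 : t10 0 {0} = 0 := by simp (config := { decide := true }) [t10]
lemma t10v02 : t10 0 {1} = 0 := by simp (config := { decide := true }) [t10]
lemma t10v03 : t10 0 {0,1} = 1/2 := by simp (config := { decide := true }) [t10]
lemma t10v10 : t10 1 ∅ = 0 := by simp (config := { decide := true }) [t10]
lemma t10v11 : t10 1 {0} = 1/2 := by simp (config := { decide := true }) [t10]
lemma t10v12 : t10 1 {1} = 1/2 := by simp (config := { decide := true }) [t10]
lemma t10v13 : t10 1 {0,1} = 0 := by simp (config := { decide := true }) [t10]

lemma sumt0 : ∑ S, t10 0 S = 1/2 := by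
  rw [sum4, t10v00, t10v01, t10v02, t10v03]; norm_num
lemma sumt1 : ∑ S, t10 1 S = 1 := by
  rw [sum4, t10v10, t10v11, t10v12, t10v13]; norm_num

lemma filt0 : (Finset.univ.filter fun S : Finset (Fin 2) => (0:Fin 2) ∈ S) = {{0}, {0,1}} := by
  decide
lemma filt1 : (Finset.univ.filter fun S : Finset (Fin 2) => (1:Fin 2) ∈ S) = {{1}, {0,1}} := by
  decide

lemma wl0 : workerLoad t10 0 = 1 := by
  rw [workerLoad, Fin.sum_univ_two, filt0,
    Finset.sum_insert (by decide), Finset.sum_singleton,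
    Finset.sum_insert (by decide), Finset.sum_singleton,
    t10v01, t10v03, t10v11, t10v13]
  norm_num

lemma wl1 : workerLoad t10 1 = 1 := by
  rw [workerLoad, Fin.sum_univ_two, filt1,
    Finset.sum_insert (by decide), Finset.sum_singleton,
    Finset.sum_insert (by decide), Finset.sum_singleton,
    t10v02, t10v03, t10v12, t10v13]
  norm_num

/-- The market f1: {w1,w2} ≻ ∅, f2: {w1} ≻ {w2} ≻ ∅, w1: f1 ≻ f2, w2: f1 ≻ f2
is not concave: `t10` is a schedule matching which no full-time matching dominates. -/
theorem stmt10 :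
    IsSched uF10 (fun _ => 1) (fun _ => 1) t10 ∧
    ¬∃ μ : Fin 2 → Option (Fin 2), Dominates uF10 uW10 (fun _ => 1) (fun _ => 1) t10 μ := by
  have huF00 : uF10 0 ∅ = 0 := by simp (config := { decide := true }) [uF10]
  have huF01 : uF10 0 {0} = -1 := by simp (config := { decide := true }) [uF10]
  have huF02 : uF10 0 {1} = -1 := by simp (config := { decide := true }) [uF10]
  have huF03 : uF10 0 {0,1} = 1 := by simp (config := { decide := true }) [uF10]
  have huF10 : uF10 1 ∅ = 0 := by simp (config := { decide := true }) [uF10]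
  have huF11 : uF10 1 {0} = 2 := by simp (config := { decide := true }) [uF10]
  have huF12 : uF10 1 {1} = 1 := by simp (config := { decide := true }) [uF10]
  have huF13 : uF10 1 {0,1} = -1 := by simp (config := { decide := true }) [uF10]
  have huW : ∀ w : Fin 2, uW10 w (some 0) = 2 ∧ uW10 w (some 1) = 1 ∧ uW10 w none = 0 := by
    intro w
    refine ⟨by simp (config := { decide := true }) [uW10],
      by simp (config := { decide := true }) [uW10],
      by simp (config := { decide := true }) [uW10]⟩
  constructor
  · refine ⟨?_, ?_, ?_, ?_⟩
    · intro f S; unfold t10; split_ifs <;> norm_num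
    · intro f S h
      rcases t10pos f S h with ⟨hf, hS⟩ | ⟨hf, hS | hS⟩ <;> subst hf <;> subst hS
      · rw [huF03, huF00]; norm_num
      · rw [huF11, huF10]; norm_num
      · rw [huF12, huF10]; norm_num
    · intro f
      fin_cases f
      · show ∑ S, t10 0 S ≤ (1:ℝ)
        rw [sumt0]; norm_num
      · show ∑ S, t10 1 S ≤ (1:ℝ)
        rw [sumt1]
    · intro w
      fin_cases w
      · show workerLoad t10 0 ≤ (1:ℝ)
        rw [wl0]
      · show workerLoad t10 1 ≤ (1:ℝ)
        rw [wl1]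
  · rintro ⟨μ, hdF, hdW⟩
    -- worst situations
    have wF1 : WorstF uF10 (fun _ => 1) t10 0 ∅ := by
      right; rw [sumt0]; norm_num
    have wF2 : WorstF uF10 (fun _ => 1) t10 1 {1} := by
      left
      refine ⟨sumt1, by rw [t10v12]; norm_num, ?_⟩
      intro S hS
      rcases t10pos 1 S hS with ⟨hf, _⟩ | ⟨_, hS | hS⟩
      · exact absurd hf (by decide)
      · subst hS; rw [huF12, huF11]; norm_num
      · subst hS; exact le_rfl
    have wW0 : WorstW uF10 uW10 (fun _ => 1) t10 0 (some (1, {0})) := by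
      left
      refine ⟨wl0, 1, {0}, rfl, by rw [t10v11]; norm_num, by decide, ?_⟩
      intro f' S' ht hw
      rcases t10pos f' S' ht with ⟨hf, hS⟩ | ⟨hf, hS | hS⟩ <;> subst hf <;> subst hS
      · left; left; rw [(huW 0).1, (huW 0).2.1]; norm_num
      · right; rfl
      · exact absurd hw (by decide)
    have wW1 : WorstW uF10 uW10 (fun _ => 1) t10 1 (some (1, {1})) := by
      left
      refine ⟨wl1, 1, {1}, rfl, by rw [t10v12]; norm_num, by decide, ?_⟩
      intro f' S' ht hw
      rcases t10pos f' S' ht with ⟨hf, hS⟩ | ⟨hf, hS | hS⟩ <;> subst hf <;> subst hS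
      · left; left; rw [(huW 1).1, (huW 1).2.1]; norm_num
      · exact absurd hw (by decide)
      · right; rfl
    have hF1 := hdF 0 ∅ wF1
    have hF2 := hdF 1 {1} wF2
    have hw0 := hdW 0 (some (1, {0})) wW0
    have hw1 := hdW 1 (some (1, {1})) wW1
    rw [huF00] at hF1
    rw [huF12] at hF2
    -- if some worker is unmatched, her domination condition fails
    have hm0 : ∃ f, μ 0 = some f := by
      rcases h : μ 0 with _ | f
      · exfalso
        rcases hw0 with hb | he
        · simp only [situ, h, Option.map_none] at hb
          simp (config := { decide := true }) [wB, uW10] at hb; norm_num at hb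
        · simp [situ, h] at he
      · exact ⟨f, rfl⟩
    have hm1 : ∃ f, μ 1 = some f := by
      rcases h : μ 1 with _ | f
      · exfalso
        rcases hw1 with hb | he
        · simp only [situ, h, Option.map_none] at hb
          simp (config := { decide := true }) [wB, uW10] at hb; norm_num at hb
        · simp [situ, h] at he
      · exact ⟨f, rfl⟩
    obtain ⟨f0, h0⟩ := hm0
    obtain ⟨f1, h1⟩ := hm1
    fin_cases f0 <;> fin_cases f1
    · -- μ 0 = 0, μ 1 = 0 : assigned μ 1 = ∅
      have a1 : assigned μ 1 = ∅ := by
        ext w; fin_cases w <;> simp [assigned, h0, h1]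
      rw [a1, huF10] at hF2; norm_num at hF2
    · -- μ 0 = 0, μ 1 = 1 : assigned μ 0 = {0}
      have a0 : assigned μ 0 = {0} := by
        ext w; fin_cases w <;> simp [assigned, h0, h1]
      rw [a0, huF01] at hF1; norm_num at hF1
    · -- μ 0 = 1, μ 1 = 0 : assigned μ 0 = {1}
      have a0 : assigned μ 0 = {1} := by
        ext w; fin_cases w <;> simp [assigned, h0, h1]
      rw [a0, huF02] at hF1; norm_num at hF1
    · -- μ 0 = 1, μ 1 = 1 : assigned μ 1 = {0,1}
      have a1 : assigned μ 1 = {0,1} := by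
        ext w; fin_cases w <;> simp [assigned, h0, h1]
      rw [a1, huF13] at hF2; norm_num at hF2
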